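/- Let I be a Borel-fixed monomial ideal of K[x_0,...,x_n] generated in degrees ≤ m, and let F be the set of degree-m monomials in I. Suppose x^A is a degree-m standard monomial (x^A ∉ I), and let k = max(A) be the largest index of a variable dividing x^A. Then for any i, x_i·x^A ∈ I if and only if (x_i/x_k)·x^A ∈ F. -/
import Mathlib


open MvPolynomial

def IsMonomialIdeal {n : ℕ} {K : Type*} [CommRing K]
    (I : Ideal (MvPolynomial (Fin (n + 1)) K)) : Prop :=
  ∀ p ∈ I, ∀ A ∈ p.support, (monomial A (1 : K)) ∈ I

def BorelCombinatorial {n : ℕ} {K : Type*} [CommRing K]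
    (I : Ideal (MvPolynomial (Fin (n + 1)) K)) : Prop :=
  ∀ A : Fin (n + 1) →₀ ℕ, monomial A (1 : K) ∈ I →
    ∀ j : Fin (n + 1), A j ≠ 0 → ∀ i : Fin (n + 1), i < j →
      monomial (A + Finsupp.single i 1 - Finsupp.single j 1) (1 : K) ∈ I

def degSum {n : ℕ} (A : Fin (n + 1) →₀ ℕ) : ℕ := ∑ i, A i

/-- `I` is generated in degrees `≤ m`: every monomial of `I` of degree `> m` is
divisible by a monomial of `I` of degree `≤ m`. -/
def GeneratedInDegLE {n : ℕ} {K : Type*} [CommRing K]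
    (I : Ideal (MvPolynomial (Fin (n + 1)) K)) (m : ℕ) : Prop :=
  ∀ C : Fin (n + 1) →₀ ℕ, monomial C (1 : K) ∈ I → m < degSum C →
    ∃ D : Fin (n + 1) →₀ ℕ, monomial D (1 : K) ∈ I ∧ degSum D ≤ m ∧ D ≤ C

lemma mem_of_le' {n : ℕ} {K : Type*} [CommRing K]
    {I : Ideal (MvPolynomial (Fin (n + 1)) K)}
    {D C : Fin (n + 1) →₀ ℕ} (hle : D ≤ C)
    (hD : monomial D (1 : K) ∈ I) : monomial C (1 : K) ∈ I := by
  have h : monomial C (1 : K) = monomial (C - D) (1 : K) * monomial D 1 := by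
    rw [monomial_mul, one_mul, tsub_add_cancel_of_le hle]
  rw [h]
  exact Ideal.mul_mem_left _ _ hD

lemma degSum_add' {n : ℕ} (A B : Fin (n + 1) →₀ ℕ) :
    degSum (A + B) = degSum A + degSum B := by
  simp [degSum, Finset.sum_add_distrib]

lemma degSum_single' {n : ℕ} (i : Fin (n + 1)) :
    degSum (Finsupp.single i (1 : ℕ)) = 1 := by
  simp [degSum, Finsupp.single_apply]

/-- Lemma: for a Borel-fixed ideal `I` generated in degrees `≤ m`, a degree-`m`
standard monomial `x^A` with `k = max(A)`, and any `i`: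
`x_i x^A ∈ I ↔ (x_i / x_k) x^A ∈ F` (the degree-`m` part of `I`). -/
theorem stmt9 {n m : ℕ} {K : Type*} [Field K]
    (I : Ideal (MvPolynomial (Fin (n + 1)) K)) (hI : IsMonomialIdeal I)
    (hB : BorelCombinatorial I) (hgen : GeneratedInDegLE I m)
    (A : Fin (n + 1) →₀ ℕ) (hdeg : degSum A = m) (hA : monomial A (1 : K) ∉ I)
    (k : Fin (n + 1)) (hk : A k ≠ 0) (hkmax : ∀ j : Fin (n + 1), A j ≠ 0 → j ≤ k)
    (i : Fin (n + 1)) :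
    monomial (A + Finsupp.single i 1) (1 : K) ∈ I ↔
      (monomial (A + Finsupp.single i 1 - Finsupp.single k 1) (1 : K) ∈ I ∧
        degSum (A + Finsupp.single i 1 - Finsupp.single k 1) = m) := by
  set C := A + Finsupp.single i 1 with hC
  have hCapply : ∀ j, C j = A j + (if i = j then 1 else 0) := by
    intro j; simp [hC, Finsupp.add_apply, Finsupp.single_apply]
  have hCk1 : 1 ≤ C k := by
    have := hCapply k
    omega
  have hek : Finsupp.single k 1 ≤ C := by
    rw [Finsupp.le_def]
    intro t
    rcases eq_or_ne k t with rfl | h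
    · simpa using hCk1
    · simp [Finsupp.single_apply, h]
  have hcancel : C - Finsupp.single k 1 + Finsupp.single k 1 = C :=
    tsub_add_cancel_of_le hek
  have hdegC : degSum C = m + 1 := by
    rw [hC, degSum_add', degSum_single', hdeg]
  have hdegCk : degSum (C - Finsupp.single k 1) = m := by
    have h1 := degSum_add' (C - Finsupp.single k 1) (Finsupp.single k 1)
    rw [hcancel, degSum_single'] at h1
    omega
  constructor
  · intro h
    refine ⟨?_, hdegCk⟩
    obtain ⟨D, hDI, hDm, hDle⟩ := hgen C h (by omega)
    have hptD : ∀ t, D t ≤ C t := Finsupp.le_def.1 hDle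
    have hDnA : ¬ D ≤ A := fun hle => hA (mem_of_le' hle hDI)
    rw [Finsupp.le_def] at hDnA
    push_neg at hDnA
    obtain ⟨ℓ, hℓ⟩ := hDnA
    have hℓi : ℓ = i := by
      by_contra h'
      have h1 := hptD ℓ
      have h2 := hCapply ℓ
      have : ¬ i = ℓ := fun e => h' e.symm
      simp [this] at h2
      omega
    subst hℓi
    have hDi : D ℓ = C ℓ := by
      have h1 := hptD ℓ
      have h2 := hCapply ℓ
      simp at h2
      omega
    rcases lt_or_eq_of_le (hptD k) with hlt | heq
    · refine mem_of_le' ?_ hDI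
      rw [Finsupp.le_def]
      intro t
      rw [Finsupp.tsub_apply, Finsupp.single_apply]
      rcases eq_or_ne k t with rfl | h'
      · rw [if_pos rfl]; omega
      · simp [h']; exact hptD t
    · -- D k = C k; find a deficient coordinate j
      have hex : ∃ j, D j < C j := by
        by_contra h'
        push_neg at h'
        have hDC : D = C := le_antisymm hDle (Finsupp.le_def.2 h')
        rw [hDC] at hDm
        omega
      obtain ⟨j, hj⟩ := hex
      have hjk : j ≠ k := by intro e; rw [e, heq] at hj; omega
      have hji : j ≠ ℓ := by intro e; rw [e, hDi] at hj; omega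
      have hAj : A j ≠ 0 := by
        have h2 := hCapply j
        have : ¬ ℓ = j := fun e => hji e.symm
        simp [this] at h2
        omega
      have hjlt : j < k := lt_of_le_of_ne (hkmax j hAj) hjk
      have hDk0 : D k ≠ 0 := by omega
      have hB' := hB D hDI k hDk0 j hjlt
      refine mem_of_le' ?_ hB'
      rw [Finsupp.le_def]
      intro t
      simp only [Finsupp.tsub_apply, Finsupp.add_apply, Finsupp.single_apply]
      have h1 := hptD t
      by_cases e1 : j = t
      · subst e1
        have e2 : ¬ k = j := fun h => hjk h.symm
        simp only [if_pos rfl, if_neg e2, if_true]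
        omega
      · by_cases e2 : k = t
        · subst e2
          simp only [if_neg e1, if_pos rfl, if_true]
          omega
        · simp only [if_neg e1, if_neg e2]
          omega
  · rintro ⟨h1, _⟩
    exact mem_of_le' tsub_le_self h1
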